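/- Let Δ₁, Δ₂ ≥ 1 be real numbers. Let A₁ be an n×n signed bipartite adjacency matrix with parts of sizes s and n−s such that every eigenvalue μ of A₁ satisfies |μ| ≤ 2√(Δ₁ − 1), and let A₂ be an m×m signed adjacency matrix such that every eigenvalue μ of A₂ satisfies |μ| ≤ 2√(Δ₂ − 1). Let 𝒜 = A₁⊗I_m + D⊗A₂ be the signed Cartesian product matrix, where D = diag(I_s, −I_{n−s}). Then every eigenvalue ν of 𝒜 satisfies |ν| ≤ 2√(Δ₁ + Δ₂ − 2); i.e., the spectral radius of the signed Cartesian product is at most 2√(Δ₁+Δ₂−2). -/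

import Mathlib

open Matrix Kronecker

open scoped RealInnerProductSpace in
lemma rayleigh_sq_bound {n : Type*} [Fintype n] [DecidableEq n]
    (M : Matrix n n ℝ) (hM : M.IsSymm) (c : ℝ)
    (h : ∀ (μ : ℝ) (v : n → ℝ), v ≠ 0 → M.mulVec v = μ • v → |μ| ≤ c)
    (x : n → ℝ) : x ⬝ᵥ (M * M).mulVec x ≤ c ^ 2 * (x ⬝ᵥ x) := by
  have hHerm : M.IsHermitian := by
    rwa [Matrix.IsHermitian, Matrix.conjTranspose_eq_transpose_of_trivial]
  set b := hHerm.eigenvectorBasis with hb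
  set lam := hHerm.eigenvalues with hlam
  set e := WithLp.equiv 2 (n → ℝ) with he
  set v : n → (n → ℝ) := fun i => e (b i) with hv
  have hinner : ∀ u w : n → ℝ, ⟪e.symm u, e.symm w⟫ = u ⬝ᵥ w := by
    intro u w
    simp only [PiLp.inner_apply, RCLike.inner_apply, conj_trivial, dotProduct]
    exact Finset.sum_congr rfl fun i _ => mul_comm _ _
  have hsymm : ∀ u w : n → ℝ, u ⬝ᵥ M.mulVec w = (M.mulVec u) ⬝ᵥ w := by
    intro u w
    rw [Matrix.dotProduct_mulVec, ← Matrix.mulVec_transpose, hM.eq]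
  have heigv : ∀ i : n, M.mulVec (v i) = lam i • v i := fun i =>
    hHerm.mulVec_eigenvectorBasis i
  have heig : ∀ i : n, (v i) ⬝ᵥ M.mulVec x = lam i * ((v i) ⬝ᵥ x) := by
    intro i
    rw [hsymm, heigv, smul_dotProduct, smul_eq_mul]
  have hle : ∀ i : n, (lam i) ^ 2 ≤ c ^ 2 := by
    intro i
    have hne : v i ≠ 0 := by
      intro h0
      apply b.orthonormal.ne_zero i
      have := congrArg e.symm h0
      rw [show e.symm (v i) = b i from e.symm_apply_apply (b i)] at this
      simpa [he] using this
    have habs := h (lam i) (v i) hne (heigv i)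
    calc (lam i) ^ 2 = |lam i| ^ 2 := (sq_abs _).symm
    _ ≤ c ^ 2 := by nlinarith [abs_nonneg (lam i)]
  have expand : ∀ u : n → ℝ, u ⬝ᵥ u = ∑ i : n, ((v i) ⬝ᵥ u) ^ 2 := by
    intro u
    rw [← hinner u u, ← b.sum_inner_mul_inner (e.symm u) (e.symm u)]
    refine Finset.sum_congr rfl fun i _ => ?_
    have h1 : ⟪e.symm u, b i⟫ = (v i) ⬝ᵥ u := by
      rw [real_inner_comm, show b i = e.symm (v i) from (e.symm_apply_apply (b i)).symm]
      exact hinner _ _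
    rw [real_inner_comm (e.symm u) (b i), h1]
    ring
  have step1 : x ⬝ᵥ (M * M).mulVec x = (M.mulVec x) ⬝ᵥ (M.mulVec x) := by
    rw [← Matrix.mulVec_mulVec, hsymm]
  rw [step1, expand (M.mulVec x), expand x, Finset.mul_sum]
  refine Finset.sum_le_sum fun i _ => ?_
  rw [heig i, mul_pow]
  nlinarith [hle i, sq_nonneg ((v i) ⬝ᵥ x)]

lemma quad_kron_one {α β : Type*} [Fintype α] [Fintype β] [DecidableEq β]
    (M : Matrix α α ℝ) (x : α × β → ℝ) :
    x ⬝ᵥ (M ⊗ₖ (1 : Matrix β β ℝ)).mulVec x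
      = ∑ j : β, (fun i => x (i, j)) ⬝ᵥ M.mulVec (fun i => x (i, j)) := by
  simp only [Matrix.mulVec, dotProduct, Fintype.sum_prod_type, Matrix.kroneckerMap_apply,
    Matrix.one_apply, mul_ite, mul_one, mul_zero, ite_mul, zero_mul, Finset.sum_ite_eq,
    Finset.mem_univ, if_true]
  exact Finset.sum_comm

lemma quad_one_kron {α β : Type*} [Fintype α] [Fintype β] [DecidableEq α]
    (N : Matrix β β ℝ) (x : α × β → ℝ) :
    x ⬝ᵥ ((1 : Matrix α α ℝ) ⊗ₖ N).mulVec x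
      = ∑ i : α, (fun j => x (i, j)) ⬝ᵥ N.mulVec (fun j => x (i, j)) := by
  simp only [Matrix.mulVec, dotProduct, Fintype.sum_prod_type, Matrix.kroneckerMap_apply,
    Matrix.one_apply, mul_ite, mul_one, mul_zero, ite_mul, zero_mul, one_mul,
    Finset.sum_ite_eq, Finset.mem_univ, if_true]
  refine Finset.sum_congr rfl fun i _ => Finset.sum_congr rfl fun j _ => ?_
  congr 1
  rw [Finset.sum_comm]
  simp [Finset.sum_ite_eq]

/-- If every eigenvalue of the signed bipartite adjacency matrix `A₁` has absolute value at
most `2√(Δ₁ − 1)` and every eigenvalue of the signed adjacency matrix `A₂` has absolute value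
at most `2√(Δ₂ − 1)`, then every eigenvalue of the signed Cartesian product
`𝒜 = A₁ ⊗ I_m + D ⊗ A₂` has absolute value at most `2√(Δ₁ + Δ₂ − 2)`. -/
theorem signed_cartesian_product_spectral_radius (s t m : ℕ)
    (Δ₁ Δ₂ : ℝ) (hΔ₁ : 1 ≤ Δ₁) (hΔ₂ : 1 ≤ Δ₂)
    (P : Matrix (Fin s) (Fin t) ℝ)
    (hP : ∀ i j, P i j = -1 ∨ P i j = 0 ∨ P i j = 1)
    (A₂ : Matrix (Fin m) (Fin m) ℝ)
    (hA₂symm : A₂.IsSymm) (hA₂diag : ∀ i, A₂ i i = 0)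
    (hA₂ent : ∀ i j, A₂ i j = -1 ∨ A₂ i j = 0 ∨ A₂ i j = 1)
    (A₁ : Matrix (Fin s ⊕ Fin t) (Fin s ⊕ Fin t) ℝ)
    (hA₁ : A₁ = Matrix.fromBlocks 0 P Pᵀ 0)
    (D : Matrix (Fin s ⊕ Fin t) (Fin s ⊕ Fin t) ℝ)
    (hD : D = Matrix.fromBlocks 1 0 0 (-1))
    (𝒜 : Matrix ((Fin s ⊕ Fin t) × Fin m) ((Fin s ⊕ Fin t) × Fin m) ℝ)
    (h𝒜 : 𝒜 = A₁ ⊗ₖ (1 : Matrix (Fin m) (Fin m) ℝ) + D ⊗ₖ A₂)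
    (h₁ : ∀ (μ : ℝ) (x : Fin s ⊕ Fin t → ℝ), x ≠ 0 → A₁.mulVec x = μ • x →
      |μ| ≤ 2 * Real.sqrt (Δ₁ - 1))
    (h₂ : ∀ (μ : ℝ) (x : Fin m → ℝ), x ≠ 0 → A₂.mulVec x = μ • x →
      |μ| ≤ 2 * Real.sqrt (Δ₂ - 1)) :
    ∀ (ν : ℝ) (x : (Fin s ⊕ Fin t) × Fin m → ℝ), x ≠ 0 → 𝒜.mulVec x = ν • x →
      |ν| ≤ 2 * Real.sqrt (Δ₁ + Δ₂ - 2) := by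
  intro ν x hx hEig
  have hA₁symm : A₁.IsSymm := by
    rw [hA₁, Matrix.IsSymm, Matrix.fromBlocks_transpose]
    simp
  have hDD : D * D = 1 := by
    rw [hD, Matrix.fromBlocks_multiply]
    simp [Matrix.fromBlocks_one]
  have hanti : A₁ * D + D * A₁ = 0 := by
    rw [hA₁, hD, Matrix.fromBlocks_multiply, Matrix.fromBlocks_multiply,
      Matrix.fromBlocks_add]
    simp [← Matrix.fromBlocks_zero]
  have key0 : (A₁ * D) ⊗ₖ A₂ + (D * A₁) ⊗ₖ A₂ = 0 := by
    rw [← Matrix.add_kronecker, hanti, Matrix.zero_kronecker]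
  have hsq : 𝒜 * 𝒜 = (A₁ * A₁) ⊗ₖ (1 : Matrix (Fin m) (Fin m) ℝ)
      + (1 : Matrix (Fin s ⊕ Fin t) (Fin s ⊕ Fin t) ℝ) ⊗ₖ (A₂ * A₂) := by
    rw [h𝒜, add_mul, mul_add, mul_add, ← Matrix.mul_kronecker_mul, ← Matrix.mul_kronecker_mul,
      ← Matrix.mul_kronecker_mul, ← Matrix.mul_kronecker_mul]
    simp only [Matrix.one_mul, Matrix.mul_one, hDD]
    have rearr : ∀ (P' Q R S : Matrix ((Fin s ⊕ Fin t) × Fin m)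
        ((Fin s ⊕ Fin t) × Fin m) ℝ), P' + Q + (R + S) = P' + S + (Q + R) := by
      intros; abel
    rw [rearr, key0, add_zero]
  set c1 := 2 * Real.sqrt (Δ₁ - 1) with hc1
  set c2 := 2 * Real.sqrt (Δ₂ - 1) with hc2
  have hc1sq : c1 ^ 2 = 4 * (Δ₁ - 1) := by
    rw [hc1, mul_pow, Real.sq_sqrt (by linarith)]; norm_num
  have hc2sq : c2 ^ 2 = 4 * (Δ₂ - 1) := by
    rw [hc2, mul_pow, Real.sq_sqrt (by linarith)]; norm_num
  have e1 : x ⬝ᵥ (𝒜 * 𝒜).mulVec x = ν ^ 2 * (x ⬝ᵥ x) := by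
    rw [← Matrix.mulVec_mulVec, hEig, Matrix.mulVec_smul, hEig, smul_smul,
      dotProduct_smul, smul_eq_mul]
    ring
  have t1 : x ⬝ᵥ ((A₁ * A₁) ⊗ₖ (1 : Matrix (Fin m) (Fin m) ℝ)).mulVec x
      ≤ c1 ^ 2 * (x ⬝ᵥ x) := by
    rw [quad_kron_one]
    have hxx : x ⬝ᵥ x = ∑ j : Fin m, (fun i => x (i, j)) ⬝ᵥ (fun i => x (i, j)) := by
      simp only [dotProduct, Fintype.sum_prod_type]
      exact Finset.sum_comm
    rw [hxx, Finset.mul_sum]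
    exact Finset.sum_le_sum fun j _ => rayleigh_sq_bound A₁ hA₁symm c1 h₁ _
  have t2 : x ⬝ᵥ ((1 : Matrix (Fin s ⊕ Fin t) (Fin s ⊕ Fin t) ℝ) ⊗ₖ (A₂ * A₂)).mulVec x
      ≤ c2 ^ 2 * (x ⬝ᵥ x) := by
    rw [quad_one_kron]
    have hxx : x ⬝ᵥ x = ∑ i : Fin s ⊕ Fin t, (fun j => x (i, j)) ⬝ᵥ (fun j => x (i, j)) := by
      simp only [dotProduct, Fintype.sum_prod_type]
    rw [hxx, Finset.mul_sum]
    exact Finset.sum_le_sum fun i _ => rayleigh_sq_bound A₂ hA₂symm c2 h₂ _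
  have e2 : x ⬝ᵥ (𝒜 * 𝒜).mulVec x
      = x ⬝ᵥ ((A₁ * A₁) ⊗ₖ (1 : Matrix (Fin m) (Fin m) ℝ)).mulVec x
        + x ⬝ᵥ ((1 : Matrix (Fin s ⊕ Fin t) (Fin s ⊕ Fin t) ℝ) ⊗ₖ (A₂ * A₂)).mulVec x := by
    rw [hsq, Matrix.add_mulVec, dotProduct_add]
  have hS : 0 < x ⬝ᵥ x := by
    have h0 : 0 ≤ x ⬝ᵥ x := Finset.sum_nonneg fun p _ => mul_self_nonneg _
    have hne : x ⬝ᵥ x ≠ 0 := fun h => hx (by rwa [dotProduct_self_eq_zero] at h)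
    exact lt_of_le_of_ne h0 (Ne.symm hne)
  have hnu : ν ^ 2 ≤ 4 * (Δ₁ + Δ₂ - 2) := by
    have hmain : ν ^ 2 * (x ⬝ᵥ x) ≤ (4 * (Δ₁ + Δ₂ - 2)) * (x ⬝ᵥ x) := by
      have := e1 ▸ e2
      nlinarith [t1, t2]
    exact (mul_le_mul_iff_of_pos_right hS).mp hmain
  have hrt : 0 ≤ 2 * Real.sqrt (Δ₁ + Δ₂ - 2) := by positivity
  have hr2 : (2 * Real.sqrt (Δ₁ + Δ₂ - 2)) ^ 2 = 4 * (Δ₁ + Δ₂ - 2) := by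
    rw [mul_pow, Real.sq_sqrt (by linarith)]; norm_num
  calc |ν| = Real.sqrt (ν ^ 2) := (Real.sqrt_sq_eq_abs ν).symm
  _ ≤ Real.sqrt ((2 * Real.sqrt (Δ₁ + Δ₂ - 2)) ^ 2) := Real.sqrt_le_sqrt (by rw [hr2]; exact hnu)
  _ = 2 * Real.sqrt (Δ₁ + Δ₂ - 2) := Real.sqrt_sq hrt
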